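/- Let k₁,k₂>0, J(z)=k₁/z¹²−k₂/z⁶ for z>0 and +∞ for z≤0, and let δ₁:=(2k₁/k₂)^{1/6} be the unique minimizer of J. Fix an integer j≥2 and a real z with 0<z≤δ₁. Then over all (z_1,…,z_j)∈ℝ^j with Σ_{s=1}^j z_s = j·z, the sum Σ_{s=1}^j J(z_s) attains its infimum, and it is attained exactly at the single point z_1=z_2=…=z_j=z; in particular inf{Σ_{s=1}^j J(z_s) : Σ_{s=1}^j z_s=jz} = j·J(z). -/

import Mathlib

open Filter Finset Set

noncomputable section

/-- The Lennard-Jones potential, extended by `+∞` on `(-∞,0]`. -/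
def LJ (k₁ k₂ : ℝ) (z : ℝ) : EReal :=
  if 0 < z then ((k₁ / z ^ 12 - k₂ / z ^ 6 : ℝ) : EReal) else ⊤

/-- The unique minimizer of the Lennard-Jones potential. -/
def delta1 (k₁ k₂ : ℝ) : ℝ := (2 * k₁ / k₂) ^ ((1 : ℝ) / 6)

private lemma ljderiv (k₁ k₂ m : ℝ) (u : ℝ) (hu : u ≠ 0) :
    HasDerivAt (fun v : ℝ => k₁ / v ^ 12 - k₂ / v ^ 6 - m * v)
      ((6*k₂*u^6 - 12*k₁)/u^13 - m) u := by
  have h1 : HasDerivAt (fun v : ℝ => k₁ / v ^ 12) (-12*k₁/u^13) u := by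
    have := (hasDerivAt_const u k₁).div (hasDerivAt_pow 12 u) (pow_ne_zero 12 hu)
    refine this.congr_deriv ?_
    field_simp; ring
  have h2 : HasDerivAt (fun v : ℝ => k₂ / v ^ 6) (-6*k₂/u^7) u := by
    have := (hasDerivAt_const u k₂).div (hasDerivAt_pow 6 u) (pow_ne_zero 6 hu)
    refine this.congr_deriv ?_
    field_simp; ring
  have h3 : HasDerivAt (fun v : ℝ => m * v) m u := by
    simpa using (hasDerivAt_id u).const_mul m
  have := (h1.sub h2).sub h3
  refine this.congr_deriv ?_
  field_simp; ring

private lemma tangent (k₁ k₂ z t : ℝ) (hk₁ : 0 < k₁) (hz : 0 < z)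
    (h6 : z ^ 6 * k₂ ≤ 2 * k₁) (ht : 0 < t) (hne : t ≠ z) :
    k₁ / z ^ 12 - k₂ / z ^ 6 + (6*k₂*z^6 - 12*k₁)/z^13 * (t - z)
      < k₁ / t ^ 12 - k₂ / t ^ 6 := by
  set m : ℝ := (6*k₂*z^6 - 12*k₁)/z^13 with hm
  set g : ℝ → ℝ := fun v => k₁ / v ^ 12 - k₂ / v ^ 6 - m * v with hg
  suffices h : g z < g t by
    simp only [hg] at h
    nlinarith [h]
  have hcont : ∀ s : Set ℝ, (∀ x ∈ s, x ≠ 0) → ContinuousOn g s := by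
    intro s hs
    exact fun x hx => ((ljderiv k₁ k₂ m x (hs x hx)).continuousAt).continuousWithinAt
  rcases lt_or_gt_of_ne hne with hlt | hgt
  · have hanti : StrictAntiOn g (Ioc 0 z) := by
      apply strictAntiOn_of_deriv_neg (convex_Ioc 0 z)
        (hcont _ (fun x hx => ne_of_gt hx.1))
      intro x hx
      rw [interior_Ioc] at hx
      have hx0 : 0 < x := hx.1
      rw [(ljderiv k₁ k₂ m x hx0.ne').deriv]
      have key : (6*k₂*x^6 - 12*k₁)*z^13 < (6*k₂*z^6 - 12*k₁)*x^13 := by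
        have hA : 6*k₂*(x^6*z^6) ≤ 12*k₁*x^6 := by nlinarith [pow_pos hx0 6]
        have hB : (0:ℝ) ≤ z^7 - x^7 := by
          nlinarith [pow_lt_pow_left₀ hx.2 hx0.le (n := 7) (by norm_num)]
        have hC : 6*k₂*(x^6*z^6)*(z^7-x^7) ≤ 12*k₁*x^6*(z^7-x^7) :=
          mul_le_mul_of_nonneg_right hA hB
        have hD : x^6*z^7 < z^13 := by
          nlinarith [pow_lt_pow_left₀ hx.2 hx0.le (n := 6) (by norm_num), pow_pos hz 7]
        nlinarith [mul_lt_mul_of_pos_left hD (by positivity : (0:ℝ) < 12*k₁)]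
      rw [hm, div_sub_div _ _ (by positivity : x^13 ≠ 0) (by positivity : z^13 ≠ 0)]
      apply div_neg_of_neg_of_pos
      · linarith
      · positivity
    exact hanti (mem_Ioc.2 ⟨ht, hlt.le⟩) (mem_Ioc.2 ⟨hz, le_rfl⟩) hlt
  · have hmono : StrictMonoOn g (Ici z) := by
      apply strictMonoOn_of_deriv_pos (convex_Ici z)
        (hcont _ (fun x hx => (lt_of_lt_of_le hz hx).ne'))
      intro x hx
      rw [interior_Ici] at hx
      have hx0 : 0 < x := hz.trans hx
      rw [(ljderiv k₁ k₂ m x hx0.ne').deriv]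
      have key : (6*k₂*z^6 - 12*k₁)*x^13 < (6*k₂*x^6 - 12*k₁)*z^13 := by
        have hA : 6*k₂*(z^6*x^6) ≤ 12*k₁*x^6 := by nlinarith [pow_pos hx0 6]
        have hB : (0:ℝ) ≤ x^7 - z^7 := by
          nlinarith [pow_lt_pow_left₀ hx hz.le (n := 7) (by norm_num)]
        have hC : 6*k₂*(z^6*x^6)*(x^7-z^7) ≤ 12*k₁*x^6*(x^7-z^7) :=
          mul_le_mul_of_nonneg_right hA hB
        have hD : z^13 < x^6*z^7 := by
          nlinarith [pow_lt_pow_left₀ hx hz.le (n := 6) (by norm_num), pow_pos hz 7]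
        nlinarith [mul_lt_mul_of_pos_left hD (by positivity : (0:ℝ) < 12*k₁)]
      rw [hm, div_sub_div _ _ (by positivity : x^13 ≠ 0) (by positivity : z^13 ≠ 0)]
      apply div_pos
      · linarith
      · positivity
    exact hmono (mem_Ici.2 le_rfl) (mem_Ici.2 hgt.le) hgt

private lemma ecoe_sum {α : Type*} (s : Finset α) (f : α → ℝ) :
    ((∑ i ∈ s, f i : ℝ) : EReal) = ∑ i ∈ s, ((f i : ℝ) : EReal) :=
  map_sum (⟨⟨Real.toEReal, EReal.coe_zero⟩, EReal.coe_add⟩ : ℝ →+ EReal) f s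

private lemma esum_ne_bot {α : Type*} (s : Finset α) (f : α → EReal)
    (h : ∀ i ∈ s, f i ≠ ⊥) : ∑ i ∈ s, f i ≠ ⊥ := by
  classical
  induction s using Finset.induction_on with
  | empty => simp
  | insert _ _ ha ih =>
    rw [Finset.sum_insert ha]
    intro hbot
    rcases EReal.add_eq_bot_iff.1 hbot with h1 | h2
    · exact h _ (Finset.mem_insert_self _ _) h1
    · exact ih (fun i hi => h i (Finset.mem_insert_of_mem hi)) h2

private lemma esum_top {α : Type*} (s : Finset α) (f : α → EReal)
    (h : ∀ i ∈ s, f i ≠ ⊥) {a : α} (ha : a ∈ s) (hfa : f a = ⊤) :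
    ∑ i ∈ s, f i = ⊤ := by
  classical
  rw [← Finset.add_sum_erase _ _ ha, hfa]
  exact EReal.top_add_of_ne_bot
    (esum_ne_bot _ _ (fun i hi => h i (Finset.mem_of_mem_erase hi)))

/-- for `0 < z ≤ δ₁` and `j ≥ 2`, the infimum of `Σ_{s=1}^j J(z_s)` over all
`(z_1,…,z_j)` with `Σ z_s = jz` equals `j·J(z)`, is attained, and is attained exactly at
the single point `z_1 = … = z_j = z`. -/
theorem inf_convolution_no_oscillation (k₁ k₂ : ℝ) (hk₁ : 0 < k₁) (hk₂ : 0 < k₂)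
    (j : ℕ) (hj : 2 ≤ j) (z : ℝ) (hz0 : 0 < z) (hz : z ≤ delta1 k₁ k₂) :
    sInf {y : EReal | ∃ p : Fin j → ℝ, (∑ s, p s) = j * z ∧ y = ∑ s, LJ k₁ k₂ (p s)} =
      ((j : ℝ) : EReal) * LJ k₁ k₂ z ∧
    ((j : ℝ) : EReal) * LJ k₁ k₂ z ∈
      {y : EReal | ∃ p : Fin j → ℝ, (∑ s, p s) = j * z ∧ y = ∑ s, LJ k₁ k₂ (p s)} ∧
    (∀ p : Fin j → ℝ, (∑ s, p s) = j * z →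
      ((j : ℝ) : EReal) * LJ k₁ k₂ z ≤ ∑ s, LJ k₁ k₂ (p s)) ∧
    (∀ p : Fin j → ℝ, (∑ s, p s) = j * z →
      (∑ s, LJ k₁ k₂ (p s)) = ((j : ℝ) : EReal) * LJ k₁ k₂ z → p = fun _ => z) := by
  -- from z ≤ δ₁ deduce z^6 * k₂ ≤ 2k₁
  have h6 : z ^ 6 * k₂ ≤ 2 * k₁ := by
    have hq : (0:ℝ) ≤ 2 * k₁ / k₂ := by positivity
    have h1 : z ^ 6 ≤ (delta1 k₁ k₂) ^ 6 := pow_le_pow_left₀ hz0.le hz 6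
    have h2 : (delta1 k₁ k₂) ^ 6 = 2 * k₁ / k₂ := by
      rw [delta1, ← Real.rpow_natCast ((2 * k₁ / k₂) ^ ((1:ℝ)/6)) 6,
        ← Real.rpow_mul hq]
      norm_num
    rw [h2] at h1
    rw [← le_div_iff₀ hk₂]
    exact h1
  obtain ⟨c, hc⟩ : ∃ c : ℝ, c = k₁ / z ^ 12 - k₂ / z ^ 6 := ⟨_, rfl⟩
  obtain ⟨m, hm⟩ : ∃ m : ℝ, m = (6*k₂*z^6 - 12*k₁)/z^13 := ⟨_, rfl⟩
  have hLJz : LJ k₁ k₂ z = ((c : ℝ) : EReal) := by rw [hc]; exact if_pos hz0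
  have hjz : ((j : ℝ) : EReal) * LJ k₁ k₂ z = (((j : ℝ) * c : ℝ) : EReal) := by
    rw [hLJz, EReal.coe_mul]
  -- line lower bound
  have hline_le : ∀ t : ℝ, ((c + m * (t - z) : ℝ) : EReal) ≤ LJ k₁ k₂ t := by
    intro t
    by_cases ht : 0 < t
    · rw [LJ, if_pos ht, EReal.coe_le_coe_iff]
      rcases eq_or_ne t z with rfl | hne
      · rw [hc]; simp
      · rw [hc, hm]; exact (tangent k₁ k₂ z t hk₁ hz0 h6 ht hne).le
    · rw [LJ, if_neg ht]; exact le_top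
  have hline_lt : ∀ t : ℝ, 0 < t → t ≠ z → c + m * (t - z) < k₁ / t ^ 12 - k₂ / t ^ 6 := by
    intro t ht hne
    rw [hc, hm]
    exact tangent k₁ k₂ z t hk₁ hz0 h6 ht hne
  -- sum of line over a feasible point
  have hsum_line : ∀ p : Fin j → ℝ, (∑ s, p s) = j * z →
      ∑ s, (c + m * (p s - z)) = (j : ℝ) * c := by
    intro p hp
    rw [Finset.sum_add_distrib, ← Finset.mul_sum, Finset.sum_sub_distrib, hp,
      Finset.sum_const, Finset.sum_const, Finset.card_univ, Fintype.card_fin,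
      nsmul_eq_mul, nsmul_eq_mul]
    ring
  -- lower bound
  have hlb : ∀ p : Fin j → ℝ, (∑ s, p s) = j * z →
      ((j : ℝ) : EReal) * LJ k₁ k₂ z ≤ ∑ s, LJ k₁ k₂ (p s) := by
    intro p hp
    rw [hjz, ← hsum_line p hp, ecoe_sum]
    exact Finset.sum_le_sum (fun s _ => hline_le (p s))
  -- membership
  have hmem : ((j : ℝ) : EReal) * LJ k₁ k₂ z ∈
      {y : EReal | ∃ p : Fin j → ℝ, (∑ s, p s) = j * z ∧ y = ∑ s, LJ k₁ k₂ (p s)} := by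
    refine ⟨fun _ => z, ?_, ?_⟩
    · rw [Finset.sum_const, Finset.card_univ, Fintype.card_fin, nsmul_eq_mul]
    · rw [hjz]
      have : ∀ s : Fin j, LJ k₁ k₂ z = ((c : ℝ) : EReal) := fun _ => hLJz
      rw [Finset.sum_congr rfl (fun s _ => this s), ← ecoe_sum,
        Finset.sum_const, Finset.card_univ, Fintype.card_fin, nsmul_eq_mul]
  -- uniqueness
  have huniq : ∀ p : Fin j → ℝ, (∑ s, p s) = j * z →
      (∑ s, LJ k₁ k₂ (p s)) = ((j : ℝ) : EReal) * LJ k₁ k₂ z → p = fun _ => z := by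
    intro p hp heq
    have hLJ_ne_bot : ∀ t : ℝ, LJ k₁ k₂ t ≠ ⊥ := by
      intro t; rw [LJ]; split
      · exact EReal.coe_ne_bot _
      · simp
    have hpos : ∀ s : Fin j, 0 < p s := by
      by_contra h
      push_neg at h
      obtain ⟨s₀, hs₀⟩ := h
      have htop : ∑ s, LJ k₁ k₂ (p s) = ⊤ :=
        esum_top _ _ (fun i _ => hLJ_ne_bot (p i)) (Finset.mem_univ s₀)
          (if_neg (not_lt.2 hs₀))
      rw [htop, hjz] at heq
      exact (EReal.coe_ne_top _) heq.symm
    have hterm : ∀ s : Fin j, LJ k₁ k₂ (p s) = ((k₁ / (p s) ^ 12 - k₂ / (p s) ^ 6 : ℝ) : EReal) :=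
      fun s => if_pos (hpos s)
    rw [Finset.sum_congr rfl (fun s _ => hterm s), ← ecoe_sum, hjz,
      EReal.coe_eq_coe_iff] at heq
    -- real equality; conclude termwise equality
    funext s₀
    by_contra hne
    have hle : ∀ s ∈ Finset.univ (α := Fin j),
        c + m * (p s - z) ≤ k₁ / (p s) ^ 12 - k₂ / (p s) ^ 6 := by
      intro s _
      rcases eq_or_ne (p s) z with hsz | hsz
      · rw [hsz, hc]; simp
      · exact (hline_lt (p s) (hpos s) hsz).le
    have hstrict := Finset.sum_lt_sum hle
      ⟨s₀, Finset.mem_univ s₀, hline_lt (p s₀) (hpos s₀) hne⟩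
    rw [hsum_line p hp, heq] at hstrict
    exact lt_irrefl _ hstrict
  refine ⟨le_antisymm (sInf_le hmem) (le_sInf ?_), hmem, hlb, huniq⟩
  rintro y ⟨p, hp, rfl⟩
  exact hlb p hp
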